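/- Let W be a standard Brownian motion and b satisfy: b(0)=0; b non-decreasing on (0,∞); b continuous on [0,∞) and C¹ on (0,∞) with b' non-increasing; E[∫₀ᵀ b'(|W_s|+) ds] < ∞; and b ≥ 0 on some interval (−ε, 0). Then for almost every sample path of W, the equation X_t = ∫₀ᵗ b(X_s) ds + |W_t| has exactly one continuous solution on [0,T]. -/

import Mathlib

open MeasureTheory ProbabilityTheory intervalIntegral
open Set Filter Topology

/-- A standard one-dimensional Brownian motion: continuous paths started at `0`, Gaussian
increments `W t - W s ∼ N(0, t-s)`, and independent increments. -/
def IsBrownianMotion {Ω : Type*} [MeasurableSpace Ω] (P : Measure Ω)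
    (W : ℝ → Ω → ℝ) : Prop :=
  (∀ ω, W 0 ω = 0) ∧
  (∀ ω, Continuous fun t => W t ω) ∧
  (∀ t : ℝ, Measurable (W t)) ∧
  (∀ s t : ℝ, 0 ≤ s → s ≤ t →
    Measure.map (fun ω => W t ω - W s ω) P = gaussianReal 0 (Real.toNNReal (t - s))) ∧
  (∀ (n : ℕ) (t : Fin (n + 1) → ℝ), Monotone t → 0 ≤ t 0 →
    iIndepFun
      (fun (i : Fin n) ω => W (t i.succ) ω - W (t i.castSucc) ω) P)

section Aux
variable {b b' : ℝ → ℝ}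

lemma aux_bnonneg (hb0 : b 0 = 0) (hbmono : MonotoneOn b (Set.Ioi (0:ℝ)))
    (hbcont : ContinuousOn b (Set.Ici (0:ℝ))) : ∀ x, 0 ≤ x → 0 ≤ b x := by
  intro x hx
  rcases eq_or_lt_of_le hx with h | h
  · simp [← h, hb0]
  · have hlim : Filter.Tendsto b (nhdsWithin 0 (Set.Ioi 0)) (nhds 0) := by
      have := (hbcont 0 Set.self_mem_Ici).tendsto
      rw [hb0] at this
      exact this.mono_left (nhdsWithin_mono 0 Set.Ioi_subset_Ici_self)
    refine le_of_tendsto hlim ?_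
    filter_upwards [Ioo_mem_nhdsGT_of_mem (Set.left_mem_Ico.2 h)] with y hy
    exact hbmono hy.1 h (le_of_lt hy.2)

lemma aux_b'nonneg (hbmono : MonotoneOn b (Set.Ioi (0:ℝ)))
    (hbderiv : ∀ x ∈ Set.Ioi (0:ℝ), HasDerivAt b (b' x) x) :
    ∀ x, 0 < x → 0 ≤ b' x := by
  intro x hx
  have h : Filter.Tendsto (slope b x) (nhdsWithin x {x}ᶜ) (nhds (b' x)) :=
    hasDerivAt_iff_tendsto_slope.1 (hbderiv x hx)
  have h2 : Filter.Tendsto (slope b x) (nhdsWithin x (Set.Ioi x)) (nhds (b' x)) :=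
    h.mono_left (nhdsWithin_mono x (fun y hy => ne_of_gt hy))
  refine ge_of_tendsto h2 ?_
  filter_upwards [self_mem_nhdsWithin] with y hy
  have : 0 ≤ b y - b x := sub_nonneg.2 (hbmono hx (lt_trans hx hy) (le_of_lt hy))
  rw [slope_def_field, div_eq_inv_mul]
  exact mul_nonneg (inv_nonneg.2 (le_of_lt (sub_pos.2 hy))) this

/-- MVT consequence: for `0 < u ≤ v`, `b v - b u ≤ b' u * (v - u)`. -/
lemma aux_mvt (hbcont : ContinuousOn b (Set.Ici (0:ℝ)))
    (hbderiv : ∀ x ∈ Set.Ioi (0:ℝ), HasDerivAt b (b' x) x)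
    (hb'anti : AntitoneOn b' (Set.Ioi (0:ℝ))) :
    ∀ u v, 0 < u → u ≤ v → b v - b u ≤ b' u * (v - u) := by
  intro u v hu huv
  rcases eq_or_lt_of_le huv with h | h
  · simp [h]
  · obtain ⟨c, hc, hslope⟩ := exists_hasDerivAt_eq_slope b b' h
      (hbcont.mono (fun y hy => le_trans (le_of_lt hu) hy.1))
      (fun y hy => hbderiv y (lt_trans hu hy.1))
    have hbc : b' c ≤ b' u := hb'anti hu (lt_trans hu hc.1) (le_of_lt hc.1)
    have : (b v - b u) / (v - u) ≤ b' u := hslope ▸ hbc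
    have hvu : (0:ℝ) < v - u := by linarith
    have := mul_le_mul_of_nonneg_right this (le_of_lt hvu)
    rwa [div_mul_cancel₀ _ (ne_of_gt hvu)] at this

/-- Lipschitz bound away from zero. -/
lemma aux_lip (hbmono : MonotoneOn b (Set.Ioi (0:ℝ)))
    (hbcont : ContinuousOn b (Set.Ici (0:ℝ)))
    (hbderiv : ∀ x ∈ Set.Ioi (0:ℝ), HasDerivAt b (b' x) x)
    (hb'anti : AntitoneOn b' (Set.Ioi (0:ℝ))) :
    ∀ c u v, 0 < c → c ≤ u → c ≤ v → |b v - b u| ≤ b' c * |v - u| := by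
  have key : ∀ c u v, 0 < c → c ≤ u → c ≤ v → u ≤ v → |b v - b u| ≤ b' c * |v - u| := by
    intro c u v hc hcu hcv huv
    have hu : (0:ℝ) < u := lt_of_lt_of_le hc hcu
    have h1 : b u ≤ b v := hbmono (Set.mem_Ioi.2 hu) (Set.mem_Ioi.2 (lt_of_lt_of_le hu huv))
      huv
    have h2 : b v - b u ≤ b' u * (v - u) := aux_mvt hbcont hbderiv hb'anti u v hu huv
    have h3 : b' u ≤ b' c := hb'anti hc hu hcu
    rw [abs_of_nonneg (sub_nonneg.2 h1), abs_of_nonneg (sub_nonneg.2 huv)]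
    calc b v - b u ≤ b' u * (v - u) := h2
      _ ≤ b' c * (v - u) := mul_le_mul_of_nonneg_right h3 (by linarith)
  intro c u v hc hcu hcv
  rcases le_total u v with h | h
  · exact key c u v hc hcu hcv h
  · have := key c v u hc hcv hcu h
    rwa [abs_sub_comm (b u), abs_sub_comm u] at this

/-- Linear growth from concavity: for `0 ≤ y`, `b y ≤ b 1 + b' 1 * y`. -/
lemma aux_growth (hb0 : b 0 = 0) (hbmono : MonotoneOn b (Set.Ioi (0:ℝ)))
    (hbcont : ContinuousOn b (Set.Ici (0:ℝ)))
    (hbderiv : ∀ x ∈ Set.Ioi (0:ℝ), HasDerivAt b (b' x) x)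
    (hb'anti : AntitoneOn b' (Set.Ioi (0:ℝ))) :
    ∀ y, 0 ≤ y → b y ≤ b 1 + b' 1 * y := by
  intro y hy
  have hb'1 : 0 ≤ b' 1 := aux_b'nonneg hbmono hbderiv 1 one_pos
  rcases le_total y 1 with h | h
  · rcases eq_or_lt_of_le hy with h0 | h0
    · rw [← h0, hb0]
      have := aux_bnonneg hb0 hbmono hbcont 1 zero_le_one
      nlinarith
    · have : b y ≤ b 1 := by
        rcases eq_or_lt_of_le h with h1 | h1
        · rw [h1]
        · exact hbmono (Set.mem_Ioi.2 h0) (Set.mem_Ioi.2 one_pos) (le_of_lt h1)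
      nlinarith
  · have := aux_mvt hbcont hbderiv hb'anti 1 y one_pos h
    nlinarith

end Aux

section NN
variable {b : ℝ → ℝ} {ε : ℝ}

lemma sol_nonneg (hbnn : ∀ x, 0 ≤ x → 0 ≤ b x)
    (hbnonneg : ∀ x ∈ Set.Ioo (-ε) (0:ℝ), 0 ≤ b x) (hε : 0 < ε)
    {T : ℝ} {g x : ℝ → ℝ} (hgnn : ∀ t, 0 ≤ g t)
    (hx : ContinuousOn x (Set.Icc 0 T))
    (heq : ∀ t ∈ Set.Icc (0:ℝ) T, x t = (∫ s in (0:ℝ)..t, b (x s)) + g t) :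
    ∀ t ∈ Set.Icc (0:ℝ) T, g t ≤ x t := by
  -- step A1
  have A1 : ∀ t ∈ Set.Icc (0:ℝ) T, (∀ s ∈ Set.Ico (0:ℝ) t, -ε < x s) → g t ≤ x t := by
    intro t ht hs
    rw [heq t ht]
    have hnn : 0 ≤ ∫ s in (0:ℝ)..t, b (x s) := by
      rw [intervalIntegral.integral_of_le ht.1]
      rw [setIntegral_congr_set (MeasureTheory.Ioo_ae_eq_Ioc (μ := volume) (a := (0:ℝ)) (b := t)).symm]
      refine setIntegral_nonneg measurableSet_Ioo ?_
      intro s hsm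
      have hxe : -ε < x s := hs s ⟨le_of_lt hsm.1, hsm.2⟩
      rcases lt_or_ge (x s) 0 with h | h
      · exact hbnonneg (x s) ⟨hxe, h⟩
      · exact hbnn (x s) h
    linarith
  -- no point of Icc 0 T has x ≤ -ε
  have key : ∀ s ∈ Set.Icc (0:ℝ) T, -ε < x s := by
    by_contra hcon
    push_neg at hcon
    obtain ⟨s₀, hs₀, hxs₀⟩ := hcon
    set E : Set ℝ := {t ∈ Set.Icc (0:ℝ) T | x t ≤ -ε} with hE
    have hEc : IsClosed E := by
      have : E = Set.Icc (0:ℝ) T ∩ x ⁻¹' Set.Iic (-ε) := by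
        ext y; simp [hE, Set.mem_setOf_eq, and_comm]
      rw [this]
      exact ContinuousOn.preimage_isClosed_of_isClosed hx isClosed_Icc isClosed_Iic
    have hEne : E.Nonempty := ⟨s₀, hs₀, hxs₀⟩
    have hEbdd : BddBelow E := ⟨0, fun y hy => hy.1.1⟩
    have hτE : sInf E ∈ E := hEc.csInf_mem hEne hEbdd
    set τ := sInf E
    have hτIcc : τ ∈ Set.Icc (0:ℝ) T := hτE.1
    have := A1 τ hτIcc (by
      intro s hsm
      by_contra h
      push_neg at h
      have : s ∈ E := ⟨⟨hsm.1, le_trans (le_of_lt hsm.2) hτIcc.2⟩, h⟩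
      exact absurd (csInf_le hEbdd this) (not_le.2 hsm.2))
    have := hgnn τ
    have := hτE.2
    linarith
  intro t ht
  exact A1 t ht (fun s hsm => key s ⟨hsm.1, le_trans (le_of_lt hsm.2) ht.2⟩)

end NN

section Ex
variable {b b' : ℝ → ℝ}

lemma aux_bnonneg' : True := trivial

lemma exists_sol (hbnn : ∀ y, 0 ≤ y → 0 ≤ b y) (hb0 : b 0 = 0)
    (hbmono : MonotoneOn b (Set.Ioi (0:ℝ)))
    (hbcont : ContinuousOn b (Set.Ici (0:ℝ)))
    (hgrow : ∀ y, 0 ≤ y → b y ≤ b 1 + b' 1 * y)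
    (hA : 0 ≤ b 1) (hB : 0 ≤ b' 1)
    {T : ℝ} (hT : 0 < T) {g : ℝ → ℝ} (hg : Continuous g) (hgnn : ∀ t, 0 ≤ g t) :
    ∃ x : ℝ → ℝ, ContinuousOn x (Set.Icc 0 T) ∧
      ∀ t ∈ Set.Icc (0:ℝ) T, x t = (∫ s in (0:ℝ)..t, b (x s)) + g t := by
  set A := b 1
  set B := b' 1
  -- the truncated drift
  set bt : ℝ → ℝ := fun y => b (max y 0) with hbt
  have hbtcont : Continuous bt :=
    hbcont.comp_continuous (continuous_id.max continuous_const) (fun y => le_max_right y 0)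
  have hbtnn : ∀ y, 0 ≤ bt y := fun y => hbnn _ (le_max_right y 0)
  have hbtmono : Monotone bt := by
    intro y z hyz
    rcases le_or_gt z 0 with hz | hz
    · have h1 : max y 0 = 0 := max_eq_right (le_trans hyz hz)
      have h2 : max z 0 = 0 := max_eq_right hz
      simp [hbt, h1, h2]
    · rcases le_or_gt y 0 with hy | hy
      · have h1 : max y 0 = 0 := max_eq_right hy
        simp only [hbt, h1, hb0]
        exact hbnn _ (le_max_right z 0)
      · have h1 : max y 0 = y := max_eq_left (le_of_lt hy)
        have h2 : max z 0 = z := max_eq_left (le_of_lt hz)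
        simp only [hbt, h1, h2]
        exact hbmono hy (lt_of_lt_of_le hy hyz) hyz
  have hbtgrow : ∀ y v, y ≤ v → 0 ≤ v → bt y ≤ A + B * v := by
    intro y v hyv hv
    have h1 : bt y ≤ A + B * max y 0 := hgrow _ (le_max_right y 0)
    have h2 : max y 0 ≤ v := max_le hyv hv
    nlinarith
  -- sup bound for g
  obtain ⟨t₀, ht₀, hgt₀⟩ := isCompact_Icc.exists_isMaxOn
    ⟨0, Set.left_mem_Icc.2 (le_of_lt hT)⟩ (hg.continuousOn (s := Set.Icc 0 T))
  set G := g t₀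
  have hgt₀ : ∀ t ∈ Set.Icc (0:ℝ) T, g t ≤ G := fun t ht => hgt₀ ht
  have hG : 0 ≤ G := hgnn t₀
  set C := A * T + G with hC
  have hCnn : 0 ≤ C := by nlinarith
  set u : ℝ → ℝ := fun t => C * Real.exp (B * t) with hu
  have hunn : ∀ t, 0 ≤ u t := fun t => mul_nonneg hCnn (Real.exp_pos _).le
  have hucont : Continuous u :=
    continuous_const.mul (Real.continuous_exp.comp (continuous_const.mul continuous_id))
  have huD : ∀ t ∈ Set.Icc (0:ℝ) T, u t ≤ C * Real.exp (B * T) := by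
    intro t ht
    exact mul_le_mul_of_nonneg_left
      (Real.exp_le_exp.2 (mul_le_mul_of_nonneg_left ht.2 hB)) hCnn
  set D := A + B * (C * Real.exp (B * T)) with hD
  have hDnn : 0 ≤ D := by positivity
  -- integral of the comparison function
  have hint : ∀ t : ℝ, (∫ s in (0:ℝ)..t, (A + B * u s)) = A * t + C * (Real.exp (B * t) - 1) := by
    intro t
    have hcont : Continuous (fun s => A + B * u s) := continuous_const.add (continuous_const.mul hucont)
    have hderiv : ∀ s ∈ Set.uIcc (0:ℝ) t,
        HasDerivAt (fun r => A * r + C * Real.exp (B * r)) (A + B * u s) s := by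
      intro s _
      have h2 : HasDerivAt (fun r : ℝ => B * r) B s := by
        simpa using (hasDerivAt_id s).const_mul B
      have h3 : HasDerivAt (fun r : ℝ => Real.exp (B * r)) (Real.exp (B * s) * B) s :=
        (Real.hasDerivAt_exp (B * s)).comp s h2
      have h4 := ((hasDerivAt_id s).const_mul A).add (h3.const_mul C)
      refine HasDerivAt.congr_deriv h4 ?_
      simp only [hu]; ring
    have := intervalIntegral.integral_eq_sub_of_hasDerivAt hderiv (hcont.intervalIntegrable 0 t)
    rw [this]
    simp
    ring
  -- Picard iteration
  set X : ℕ → ℝ → ℝ := fun n => Nat.rec g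
    (fun _ xn => fun t => (∫ s in (0:ℝ)..t, bt (xn s)) + g t) n with hX
  have hX0 : X 0 = g := rfl
  have hXsucc : ∀ n, X (n+1) = fun t => (∫ s in (0:ℝ)..t, bt (X n s)) + g t := fun n => rfl
  -- continuity, lower and upper bounds, by induction
  have hmain : ∀ n, Continuous (X n) ∧ (∀ t ∈ Set.Icc (0:ℝ) T, g t ≤ X n t)
      ∧ (∀ t ∈ Set.Icc (0:ℝ) T, X n t ≤ u t) := by
    intro n
    induction n with
    | zero =>
      refine ⟨hg, fun t _ => le_refl _, fun t ht => ?_⟩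
      calc g t ≤ G := hgt₀ t ht
        _ ≤ C := by nlinarith
        _ ≤ u t := by
            have h1 : 1 ≤ Real.exp (B * t) := Real.one_le_exp (by nlinarith [ht.1])
            simp only [hu]
            nlinarith
    | succ n ih =>
      obtain ⟨ihc, ihlb, ihub⟩ := ih
      have hcint : Continuous fun s => bt (X n s) := hbtcont.comp ihc
      refine ⟨?_, ?_, ?_⟩
      · rw [hXsucc n]
        exact (intervalIntegral.continuous_primitive (fun a b' => hcint.intervalIntegrable a b') 0).add hg
      · intro t ht
        rw [hXsucc n]
        have : 0 ≤ ∫ s in (0:ℝ)..t, bt (X n s) :=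
          intervalIntegral.integral_nonneg ht.1 (fun s _ => hbtnn _)
        simp only []
        linarith
      · intro t ht
        rw [hXsucc n]
        simp only []
        have hmono : (∫ s in (0:ℝ)..t, bt (X n s)) ≤ ∫ s in (0:ℝ)..t, (A + B * u s) := by
          refine intervalIntegral.integral_mono_on ht.1 (hcint.intervalIntegrable _ _)
            ((continuous_const.add (continuous_const.mul hucont)).intervalIntegrable _ _) ?_
          intro s hs
          have hsT : s ∈ Set.Icc (0:ℝ) T := ⟨hs.1, le_trans hs.2 ht.2⟩
          exact hbtgrow _ _ (ihub s hsT) (hunn s)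
        have hgle : g t ≤ G := hgt₀ t ht
        have := hint t
        have hAtG : A * t + G ≤ C := by
          have := ht.2
          have := ht.1
          nlinarith
        calc (∫ s in (0:ℝ)..t, bt (X n s)) + g t ≤ (A * t + C * (Real.exp (B*t) - 1)) + G := by
              rw [← hint t]; linarith
          _ ≤ u t := by simp only [hu]; nlinarith
  -- monotonicity in n
  have hmonoseq : ∀ n, ∀ t ∈ Set.Icc (0:ℝ) T, X n t ≤ X (n+1) t := by
    intro n
    induction n with
    | zero =>
      intro t ht
      rw [hXsucc 0]
      have h0 : 0 ≤ ∫ s in (0:ℝ)..t, bt (X 0 s) :=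
        intervalIntegral.integral_nonneg ht.1 (fun s _ => hbtnn _)
      simp only [hX0] at h0 ⊢
      linarith
    | succ n ih =>
      intro t ht
      rw [hXsucc n, hXsucc (n+1)]
      simp only []
      have h1 : Continuous fun s => bt (X n s) := hbtcont.comp (hmain n).1
      have h2 : Continuous fun s => bt (X (n+1) s) := hbtcont.comp (hmain (n+1)).1
      have : (∫ s in (0:ℝ)..t, bt (X n s)) ≤ ∫ s in (0:ℝ)..t, bt (X (n+1) s) := by
        refine intervalIntegral.integral_mono_on ht.1 (h1.intervalIntegrable _ _)
          (h2.intervalIntegrable _ _) ?_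
        intro s hs
        exact hbtmono (ih s ⟨hs.1, le_trans hs.2 ht.2⟩)
      linarith
  -- the limit function
  set x : ℝ → ℝ := fun t => ⨆ n, X n t with hx
  have hbdd : ∀ t ∈ Set.Icc (0:ℝ) T, BddAbove (Set.range fun n => X n t) := by
    intro t ht
    exact ⟨u t, by rintro y ⟨n, rfl⟩; exact (hmain n).2.2 t ht⟩
  have hmonot : ∀ t ∈ Set.Icc (0:ℝ) T, Monotone fun n => X n t := by
    intro t ht
    exact monotone_nat_of_le_succ (fun n => hmonoseq n t ht)
  have htend : ∀ t ∈ Set.Icc (0:ℝ) T, Filter.Tendsto (fun n => X n t) Filter.atTop (nhds (x t)) :=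
    fun t ht => tendsto_atTop_ciSup (hmonot t ht) (hbdd t ht)
  have hxlb : ∀ t ∈ Set.Icc (0:ℝ) T, g t ≤ x t := by
    intro t ht
    have := le_ciSup (hbdd t ht) 0
    simpa [hx, hX0] using this
  have hxub : ∀ t ∈ Set.Icc (0:ℝ) T, x t ≤ u t := by
    intro t ht
    exact ciSup_le (fun n => (hmain n).2.2 t ht)
  have hxD : ∀ s ∈ Set.Icc (0:ℝ) T, |bt (x s)| ≤ D := by
    intro s hs
    rw [abs_of_nonneg (hbtnn _)]
    calc bt (x s) ≤ A + B * (C * Real.exp (B * T)) :=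
          hbtgrow _ _ (le_trans (hxub s hs) (huD s hs)) (by positivity)
      _ = D := rfl
  have hxnD : ∀ n, ∀ s ∈ Set.Icc (0:ℝ) T, |bt (X n s)| ≤ D := by
    intro n s hs
    rw [abs_of_nonneg (hbtnn _)]
    calc bt (X n s) ≤ A + B * (C * Real.exp (B * T)) :=
          hbtgrow _ _ (le_trans ((hmain n).2.2 s hs) (huD s hs)) (by positivity)
      _ = D := rfl
  have hxmeas : AEStronglyMeasurable x (volume.restrict (Set.Ioc 0 T)) := by
    refine aestronglyMeasurable_of_tendsto_ae Filter.atTop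
      (fun n => ((hmain n).1).aestronglyMeasurable) ?_
    filter_upwards [ae_restrict_mem measurableSet_Ioc] with s hs
    exact htend s ⟨le_of_lt hs.1, hs.2⟩
  -- equation for the limit with set integrals
  have heqn : ∀ t ∈ Set.Icc (0:ℝ) T, x t = (∫ s in Set.Ioc (0:ℝ) t, bt (x s)) + g t := by
    intro t ht
    have hfin : volume (Set.Ioc (0:ℝ) t) < ⊤ := by
      simp [Real.volume_Ioc]
    have h1 : Filter.Tendsto (fun n => X (n+1) t) Filter.atTop (nhds (x t)) :=
      (htend t ht).comp (Filter.tendsto_add_atTop_nat 1)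
    have h2 : Filter.Tendsto (fun n => (∫ s in Set.Ioc (0:ℝ) t, bt (X n s)) + g t)
        Filter.atTop (nhds ((∫ s in Set.Ioc (0:ℝ) t, bt (x s)) + g t)) := by
      refine Filter.Tendsto.add ?_ tendsto_const_nhds
      refine tendsto_integral_of_dominated_convergence (fun _ => D)
        (fun n => (hbtcont.comp (hmain n).1).aestronglyMeasurable) ?_ ?_ ?_
      · exact integrableOn_const hfin.ne
      · intro n
        filter_upwards [ae_restrict_mem measurableSet_Ioc] with s hs
        exact hxnD n s ⟨le_of_lt hs.1, le_trans hs.2 ht.2⟩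
      · filter_upwards [ae_restrict_mem measurableSet_Ioc] with s hs
        exact (hbtcont.tendsto _).comp (htend s ⟨le_of_lt hs.1, le_trans hs.2 ht.2⟩)
    have h3 : ∀ n, X (n+1) t = (∫ s in Set.Ioc (0:ℝ) t, bt (X n s)) + g t := by
      intro n
      rw [hXsucc n]
      simp only []
      rw [intervalIntegral.integral_of_le ht.1]
    rw [funext h3] at h1
    exact tendsto_nhds_unique h1 h2
  -- integrability of the limit drift on subintervals
  have hIntOn : ∀ a c : ℝ, 0 ≤ a → c ≤ T → IntegrableOn (fun s => bt (x s)) (Set.Ioc a c) := by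
    intro a c ha hc
    have hsub : Set.Ioc a c ⊆ Set.Ioc 0 T := Set.Ioc_subset_Ioc (by linarith) hc
    have hmeas : AEStronglyMeasurable (fun s => bt (x s)) (volume.restrict (Set.Ioc a c)) :=
      hbtcont.comp_aestronglyMeasurable
        (hxmeas.mono_measure (Measure.restrict_mono hsub le_rfl))
    have hfinm : IsFiniteMeasure (volume.restrict (Set.Ioc a c)) := by
      constructor
      rw [Measure.restrict_apply_univ]
      simp [Real.volume_Ioc]
    refine ⟨hmeas, ?_⟩
    refine HasFiniteIntegral.of_bounded (C := D) ?_
    filter_upwards [ae_restrict_mem measurableSet_Ioc] with s hs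
    exact hxD s ⟨le_of_lt (lt_of_le_of_lt ha hs.1), le_trans hs.2 hc⟩
  -- Lipschitz bound for the primitive
  set F : ℝ → ℝ := fun t => ∫ s in Set.Ioc (0:ℝ) t, bt (x s) with hF
  have hFlip : ∀ t1 ∈ Set.Icc (0:ℝ) T, ∀ t2 ∈ Set.Icc (0:ℝ) T, t1 ≤ t2 →
      |F t2 - F t1| ≤ D * (t2 - t1) := by
    intro t1 ht1 t2 ht2 h12
    have hunion : Set.Ioc (0:ℝ) t1 ∪ Set.Ioc t1 t2 = Set.Ioc (0:ℝ) t2 :=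
      Set.Ioc_union_Ioc_eq_Ioc ht1.1 h12
    have hdisj : Disjoint (Set.Ioc (0:ℝ) t1) (Set.Ioc t1 t2) := by
      rw [Set.disjoint_left]
      intro s hs1 hs2
      exact absurd hs1.2 (not_le.2 hs2.1)
    have hsplit : F t2 = F t1 + ∫ s in Set.Ioc t1 t2, bt (x s) := by
      rw [hF]
      simp only []
      rw [← hunion, setIntegral_union hdisj measurableSet_Ioc
        (hIntOn 0 t1 le_rfl ht1.2) (hIntOn t1 t2 ht1.1 ht2.2)]
    rw [hsplit]
    have hfin2 : volume (Set.Ioc t1 t2) < ⊤ := by simp [Real.volume_Ioc]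
    have hbound := norm_setIntegral_le_of_norm_le_const (C := D) hfin2
      (fun s hs => hxD s ⟨le_trans ht1.1 (le_of_lt hs.1), le_trans hs.2 ht2.2⟩)
      (μ := volume) (f := fun s => bt (x s))
    rw [Real.volume_real_Ioc_of_le h12] at hbound
    simpa [abs_sub_comm] using hbound
  have hFcont : ContinuousOn F (Set.Icc 0 T) := by
    have hlip : LipschitzOnWith D.toNNReal F (Set.Icc 0 T) := by
      refine LipschitzOnWith.of_dist_le_mul ?_
      intro p hp q hq
      rw [Real.dist_eq, Real.dist_eq, Real.coe_toNNReal D hDnn]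
      rcases le_total p q with h | h
      · rw [abs_sub_comm (F p), abs_of_nonpos (by linarith : p - q ≤ 0)]
        calc |F q - F p| ≤ D * (q - p) := hFlip p hp q hq h
          _ = D * -(p - q) := by ring
      · rw [abs_of_nonneg (by linarith : 0 ≤ p - q)]
        exact hFlip q hq p hp h
    exact hlip.continuousOn
  have hxcont : ContinuousOn x (Set.Icc 0 T) := by
    refine ContinuousOn.congr (hFcont.add hg.continuousOn) ?_
    intro t ht
    simp only [Pi.add_apply]
    rw [heqn t ht]
  refine ⟨x, hxcont, ?_⟩
  intro t ht
  have hbteq : ∀ s ∈ Set.Icc (0:ℝ) t, b (x s) = bt (x s) := by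
    intro s hs
    have hsx : 0 ≤ x s := le_trans (hgnn s) (hxlb s ⟨hs.1, le_trans hs.2 ht.2⟩)
    simp [hbt, max_eq_left hsx]
  have : (∫ s in (0:ℝ)..t, b (x s)) = ∫ s in (0:ℝ)..t, bt (x s) := by
    refine intervalIntegral.integral_congr ?_
    rw [Set.uIcc_of_le ht.1]
    exact hbteq
  rw [this, intervalIntegral.integral_of_le ht.1, ← heqn t ht]
end Ex

section Uq
variable {b b' : ℝ → ℝ}

lemma sol_unique
    (hbcont : ContinuousOn b (Set.Ici (0:ℝ)))
    (hb'cont : ContinuousOn b' (Set.Ioi (0:ℝ)))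
    (hlip : ∀ c u v, 0 < c → c ≤ u → c ≤ v → |b v - b u| ≤ b' c * |v - u|)
    (hb'nn : ∀ z, 0 < z → 0 ≤ b' z)
    {T : ℝ} (hT : 0 < T) {g : ℝ → ℝ} (hg : Continuous g) (hgnn : ∀ t, 0 ≤ g t)
    (hfin : ∫⁻ s in Set.Ioc (0:ℝ) T, ENNReal.ofReal (b' (g s)) ∂volume < ⊤)
    (hnull : volume {s : ℝ | s ∈ Set.Ioc (0:ℝ) T ∧ g s = 0} = 0)
    {x y : ℝ → ℝ}
    (hx : ContinuousOn x (Set.Icc 0 T)) (hxg : ∀ t ∈ Set.Icc (0:ℝ) T, g t ≤ x t)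
    (heqx : ∀ t ∈ Set.Icc (0:ℝ) T, x t = (∫ s in (0:ℝ)..t, b (x s)) + g t)
    (hy : ContinuousOn y (Set.Icc 0 T)) (hyg : ∀ t ∈ Set.Icc (0:ℝ) T, g t ≤ y t)
    (heqy : ∀ t ∈ Set.Icc (0:ℝ) T, y t = (∫ s in (0:ℝ)..t, b (y s)) + g t) :
    ∀ t ∈ Set.Icc (0:ℝ) T, x t = y t := by
  set k : ℝ → ℝ := fun s => b' (g s) with hkdef
  set U : Set ℝ := {s | 0 < g s} with hU
  have hUopen : IsOpen U := isOpen_lt continuous_const hg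
  -- a.e. positivity of g on (0,T]
  have hae : ∀ᵐ s ∂(volume.restrict (Set.Ioc (0:ℝ) T)), 0 < g s := by
    rw [ae_restrict_iff' measurableSet_Ioc, ae_iff]
    refine measure_mono_null ?_ hnull
    intro s hs
    simp only [Set.mem_setOf_eq, not_forall] at hs
    obtain ⟨hs1, hs2⟩ := hs
    exact ⟨hs1, le_antisymm (not_lt.1 hs2) (hgnn s)⟩
  -- integrability of k on (0,T]
  have hkmeas : AEMeasurable k (volume.restrict (Set.Ioc (0:ℝ) T)) := by
    have hcont : ContinuousOn k U :=
      ContinuousOn.comp (t := Set.Ioi (0:ℝ)) hb'cont hg.continuousOn (fun s hs => hs)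
    have h1 : AEMeasurable k (volume.restrict U) := hcont.aemeasurable hUopen.measurableSet
    have h2 : AEMeasurable k (volume.restrict (Set.Ioc (0:ℝ) T ∩ U)) :=
      h1.mono_measure (Measure.restrict_mono Set.inter_subset_right le_rfl)
    have h3 : volume.restrict (Set.Ioc (0:ℝ) T) = volume.restrict (Set.Ioc (0:ℝ) T ∩ U) := by
      refine Measure.restrict_congr_set ?_
      rw [ae_eq_set]
      constructor
      · refine measure_mono_null ?_ hnull
        intro s hs
        obtain ⟨hs1, hs2⟩ := hs
        refine ⟨hs1, ?_⟩
        by_contra hne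
        exact hs2 ⟨hs1, lt_of_le_of_ne (hgnn s) (Ne.symm hne)⟩
      · simp [Set.diff_eq_empty.2 Set.inter_subset_left]
    rw [h3]
    exact h2
  have hknn : ∀ᵐ s ∂(volume.restrict (Set.Ioc (0:ℝ) T)), 0 ≤ k s := by
    filter_upwards [hae] with s hs using hb'nn _ hs
  have hkint : IntegrableOn k (Set.Ioc (0:ℝ) T) := by
    refine ⟨hkmeas.aestronglyMeasurable, ?_⟩
    rw [HasFiniteIntegral]
    have : (∫⁻ s in Set.Ioc (0:ℝ) T, ‖k s‖ₑ)
        = ∫⁻ s in Set.Ioc (0:ℝ) T, ENNReal.ofReal (b' (g s)) := by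
      refine lintegral_congr_ae ?_
      filter_upwards [hknn] with s hs
      rw [Real.enorm_eq_ofReal hs]
    rw [this]
    exact hfin
  -- solutions composed with b are continuous
  have hbx : ContinuousOn (fun s => b (x s)) (Set.Icc 0 T) :=
    ContinuousOn.comp (t := Set.Ici (0:ℝ)) hbcont hx
      (fun s hs => le_trans (hgnn s) (hxg s hs))
  have hby : ContinuousOn (fun s => b (y s)) (Set.Icc 0 T) :=
    ContinuousOn.comp (t := Set.Ici (0:ℝ)) hbcont hy
      (fun s hs => le_trans (hgnn s) (hyg s hs))
  have hIx : ∀ a c : ℝ, 0 ≤ a → c ≤ T → IntegrableOn (fun s => b (x s)) (Set.Ioc a c) :=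
    fun a c ha hc => ((hbx.mono (Set.Icc_subset_Icc ha hc)).integrableOn_Icc).mono_set
      Set.Ioc_subset_Icc_self
  have hIy : ∀ a c : ℝ, 0 ≤ a → c ≤ T → IntegrableOn (fun s => b (y s)) (Set.Ioc a c) :=
    fun a c ha hc => ((hby.mono (Set.Icc_subset_Icc ha hc)).integrableOn_Icc).mono_set
      Set.Ioc_subset_Icc_self
  -- pointwise a.e. Lipschitz bound
  have hptw : ∀ᵐ s ∂(volume.restrict (Set.Ioc (0:ℝ) T)),
      s ∈ Set.Ioc (0:ℝ) T → |b (x s) - b (y s)| ≤ k s * |x s - y s| := by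
    filter_upwards [hae] with s hs hsm
    have hsIcc : s ∈ Set.Icc (0:ℝ) T := ⟨le_of_lt hsm.1, hsm.2⟩
    exact hlip (g s) (y s) (x s) hs (hyg s hsIcc) (hxg s hsIcc)
  -- the set where solutions agree from 0
  set Z : Set ℝ := {t ∈ Set.Icc (0:ℝ) T | ∀ s ∈ Set.Icc (0:ℝ) t, x s = y s} with hZ
  have h00 : x 0 = y 0 := by
    have h1 := heqx 0 (Set.left_mem_Icc.2 (le_of_lt hT))
    have h2 := heqy 0 (Set.left_mem_Icc.2 (le_of_lt hT))
    simp only [intervalIntegral.integral_same] at h1 h2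
    rw [h1, h2]
  have h0Z : (0:ℝ) ∈ Z := by
    refine ⟨Set.left_mem_Icc.2 (le_of_lt hT), ?_⟩
    intro s hs
    have : s = 0 := le_antisymm hs.2 hs.1
    rw [this]; exact h00
  have hZne : Z.Nonempty := ⟨0, h0Z⟩
  have hZbdd : BddAbove Z := ⟨T, fun t ht => ht.1.2⟩
  set τ := sSup Z with hτ
  have hτmem : τ ∈ Set.Icc (0:ℝ) T :=
    ⟨le_csSup hZbdd h0Z, csSup_le hZne (fun t ht => ht.1.2)⟩
  have hτZ : ∀ s ∈ Set.Icc (0:ℝ) τ, x s = y s := by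
    intro s hs
    rcases lt_or_eq_of_le hs.2 with hlt | heq
    · obtain ⟨t, htZ, hst⟩ := exists_lt_of_lt_csSup hZne hlt
      exact htZ.2 s ⟨hs.1, le_of_lt hst⟩
    · rw [heq]
      rcases eq_or_lt_of_le hτmem.1 with h0 | h0
      · rw [← h0]; exact h00
      · -- continuity from the left
        have hne : (𝓝[Set.Ioo (0:ℝ) τ] τ).NeBot := right_nhdsWithin_Ioo_neBot h0
        have hsub : Set.Ioo (0:ℝ) τ ⊆ Set.Icc (0:ℝ) T := fun r hr =>
          ⟨le_of_lt hr.1, le_trans (le_of_lt hr.2) hτmem.2⟩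
        have hxc : Tendsto x (𝓝[Set.Ioo (0:ℝ) τ] τ) (𝓝 (x τ)) :=
          ((hx τ ⟨hτmem.1, hτmem.2⟩).tendsto).mono_left (nhdsWithin_mono _ hsub)
        have hyc : Tendsto y (𝓝[Set.Ioo (0:ℝ) τ] τ) (𝓝 (y τ)) :=
          ((hy τ ⟨hτmem.1, hτmem.2⟩).tendsto).mono_left (nhdsWithin_mono _ hsub)
        refine tendsto_nhds_unique_of_eventuallyEq hxc hyc ?_
        filter_upwards [self_mem_nhdsWithin] with r hr
        obtain ⟨t, htZ, hrt⟩ := exists_lt_of_lt_csSup hZne hr.2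
        exact htZ.2 r ⟨le_of_lt hr.1, le_of_lt hrt⟩
  -- key step: τ = T
  have hτT : τ = T := by
    by_contra hne
    have hτlt : τ < T := lt_of_le_of_ne hτmem.2 hne
    -- primitive of k
    set k1 : ℝ → ℝ := (Set.Ioc (0:ℝ) T).indicator k with hk1
    have hk1int : Integrable k1 := (integrable_indicator_iff measurableSet_Ioc).2 hkint
    set KK : ℝ → ℝ := fun t => ∫ s in (0:ℝ)..t, k1 s with hKK
    have hKKcont : Continuous KK :=
      intervalIntegral.continuous_primitive (fun a c => hk1int.intervalIntegrable) 0
    have hKKdiff : ∀ t1 t2 : ℝ, 0 ≤ t1 → t1 ≤ t2 → t2 ≤ T →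
        KK t2 - KK t1 = ∫ s in Set.Ioc t1 t2, k s := by
      intro t1 t2 h1 h2 h3
      rw [hKK]
      simp only []
      rw [intervalIntegral.integral_interval_sub_left (hk1int.intervalIntegrable)
        (hk1int.intervalIntegrable), intervalIntegral.integral_of_le h2]
      refine setIntegral_congr_fun measurableSet_Ioc ?_
      intro s hs
      exact Set.indicator_of_mem (Set.mem_Ioc.2 ⟨lt_of_le_of_lt h1 hs.1, le_trans hs.2 h3⟩) k
    -- find t' > τ with small mass of k
    have hca : ContinuousAt KK τ := hKKcont.continuousAt
    obtain ⟨δ, hδpos, hδ⟩ := Metric.continuousAt_iff.1 hca (1/2) (by norm_num)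
    set t' : ℝ := min (τ + δ/2) T with ht'
    have hτt' : τ < t' := lt_min (by linarith) hτlt
    have ht'T : t' ≤ T := min_le_right _ _
    have ht'close : |t' - τ| < δ := by
      rw [abs_of_nonneg (by linarith)]
      have : t' ≤ τ + δ/2 := min_le_left _ _
      linarith
    have hsmall : (∫ s in Set.Ioc τ t', k s) ≤ 1/2 := by
      have h5 : dist t' τ < δ := by rw [Real.dist_eq]; exact ht'close
      have := hδ h5
      rw [Real.dist_eq] at this
      have heqd : KK t' - KK τ = ∫ s in Set.Ioc τ t', k s :=
        hKKdiff τ t' hτmem.1 (le_of_lt hτt') ht'T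
      calc (∫ s in Set.Ioc τ t', k s) = KK t' - KK τ := heqd.symm
        _ ≤ |KK t' - KK τ| := le_abs_self _
        _ ≤ 1/2 := le_of_lt this
    -- maximum of |x - y| on [τ, t']
    have hcompact : IsCompact (Set.Icc τ t') := isCompact_Icc
    have habs : ContinuousOn (fun s => |x s - y s|) (Set.Icc τ t') :=
      ((hx.sub hy).abs).mono (Set.Icc_subset_Icc hτmem.1 ht'T)
    obtain ⟨s₀, hs₀mem, hs₀max⟩ := hcompact.exists_isMaxOn
      ⟨τ, Set.left_mem_Icc.2 (le_of_lt hτt')⟩ habs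
    set M := |x s₀ - y s₀| with hM
    have hMnn : 0 ≤ M := abs_nonneg _
    have hmax : ∀ s ∈ Set.Icc τ t', |x s - y s| ≤ M := fun s hs => hs₀max hs
    have hτ0 : 0 ≤ τ := hτmem.1
    -- contraction bound on [τ, t']
    have hbound : ∀ t ∈ Set.Icc τ t', |x t - y t| ≤ (1/2) * M := by
      intro t ht
      have htIcc : t ∈ Set.Icc (0:ℝ) T := ⟨le_trans hτ0 ht.1, le_trans ht.2 ht'T⟩
      have hsub1 : Set.Ioc τ t ⊆ Set.Ioc (0:ℝ) T := Set.Ioc_subset_Ioc hτ0 htIcc.2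
      have hdisj : Disjoint (Set.Ioc (0:ℝ) τ) (Set.Ioc τ t) := by
        rw [Set.disjoint_left]
        intro s hs1 hs2
        exact absurd hs1.2 (not_le.2 hs2.1)
      have hsplitx : (∫ s in (0:ℝ)..t, b (x s))
          = (∫ s in Set.Ioc (0:ℝ) τ, b (x s)) + ∫ s in Set.Ioc τ t, b (x s) := by
        rw [intervalIntegral.integral_of_le htIcc.1, ← Set.Ioc_union_Ioc_eq_Ioc hτ0 ht.1,
          setIntegral_union hdisj measurableSet_Ioc (hIx 0 τ le_rfl hτmem.2)
            (hIx τ t hτ0 htIcc.2)]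
      have hsplity : (∫ s in (0:ℝ)..t, b (y s))
          = (∫ s in Set.Ioc (0:ℝ) τ, b (y s)) + ∫ s in Set.Ioc τ t, b (y s) := by
        rw [intervalIntegral.integral_of_le htIcc.1, ← Set.Ioc_union_Ioc_eq_Ioc hτ0 ht.1,
          setIntegral_union hdisj measurableSet_Ioc (hIy 0 τ le_rfl hτmem.2)
            (hIy τ t hτ0 htIcc.2)]
      have hcongr : (∫ s in Set.Ioc (0:ℝ) τ, b (x s)) = ∫ s in Set.Ioc (0:ℝ) τ, b (y s) := by
        refine setIntegral_congr_fun measurableSet_Ioc ?_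
        intro s hs
        show b (x s) = b (y s)
        rw [hτZ s ⟨le_of_lt hs.1, hs.2⟩]
      have hdiff : x t - y t = ∫ s in Set.Ioc τ t, (b (x s) - b (y s)) := by
        rw [integral_sub (hIx τ t hτ0 htIcc.2) (hIy τ t hτ0 htIcc.2)]
        rw [heqx t htIcc, heqy t htIcc, hsplitx, hsplity, hcongr]
        ring
      have habs1 : |x t - y t| ≤ ∫ s in Set.Ioc τ t, |b (x s) - b (y s)| := by
        rw [hdiff]
        have := MeasureTheory.norm_integral_le_integral_norm (μ := volume.restrict (Set.Ioc τ t))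
          (f := fun s => b (x s) - b (y s))
        simpa [Real.norm_eq_abs] using this
      have habs2 : (∫ s in Set.Ioc τ t, |b (x s) - b (y s)|)
          ≤ ∫ s in Set.Ioc τ t, k s * M := by
        refine integral_mono_ae ((hIx τ t hτ0 htIcc.2).sub (hIy τ t hτ0 htIcc.2)).abs
          ((hkint.mono_set hsub1).mul_const M) ?_
        have hp := ae_restrict_of_ae_restrict_of_subset hsub1 hptw
        have hn := ae_restrict_of_ae_restrict_of_subset hsub1 hknn
        filter_upwards [hp, hn, ae_restrict_mem measurableSet_Ioc] with s hs1 hs2 hs3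
        have hsmem : s ∈ Set.Ioc (0:ℝ) T := hsub1 hs3
        calc |b (x s) - b (y s)| ≤ k s * |x s - y s| := hs1 hsmem
          _ ≤ k s * M := mul_le_mul_of_nonneg_left
              (hmax s ⟨le_of_lt hs3.1, le_trans hs3.2 ht.2⟩) hs2
      have habs3 : (∫ s in Set.Ioc τ t, k s * M) ≤ (1/2) * M := by
        rw [MeasureTheory.integral_mul_const]
        have hmono : (∫ s in Set.Ioc τ t, k s) ≤ ∫ s in Set.Ioc τ t', k s := by
          refine setIntegral_mono_set (hkint.mono_set (Set.Ioc_subset_Ioc hτ0 ht'T)) ?_ ?_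
          · exact ae_restrict_of_ae_restrict_of_subset (Set.Ioc_subset_Ioc hτ0 ht'T) hknn
          · exact HasSubset.Subset.eventuallyLE (Set.Ioc_subset_Ioc_right ht.2)
        calc (∫ s in Set.Ioc τ t, k s) * M ≤ (∫ s in Set.Ioc τ t', k s) * M :=
              mul_le_mul_of_nonneg_right hmono hMnn
          _ ≤ (1/2) * M := mul_le_mul_of_nonneg_right hsmall hMnn
      linarith
    have hM0 : M = 0 := by
      have := hbound s₀ hs₀mem
      rw [← hM] at this
      linarith
    have ht'Z : t' ∈ Z := by
      refine ⟨⟨le_trans hτ0 (le_of_lt hτt'), ht'T⟩, ?_⟩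
      intro s hs
      rcases le_total s τ with h | h
      · exact hτZ s ⟨hs.1, h⟩
      · have := hmax s ⟨h, hs.2⟩
        rw [hM0] at this
        have := abs_nonpos_iff.1 (le_trans this le_rfl)
        linarith [sub_eq_zero.1 this]
    exact absurd (le_csSup hZbdd ht'Z) (not_le.2 hτt')
  intro t ht
  rw [← hτT] at ht
  exact hτZ t ht
end Uq

/-- A function continuous on an open set, extended by `0`, is measurable. -/
lemma measurable_indicator_of_continuousOn {U : Set ℝ} (hU : IsOpen U) {f : ℝ → ℝ}
    (hf : ContinuousOn f U) : Measurable (U.indicator f) := by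
  refine measurable_of_isOpen fun V hV => ?_
  by_cases h0 : (0:ℝ) ∈ V
  · have h : U.indicator f ⁻¹' V = (U ∩ f ⁻¹' V) ∪ Uᶜ := by
      ext z
      by_cases hz : z ∈ U <;> simp [Set.indicator_apply, hz, h0]
    rw [h]
    exact ((hf.isOpen_inter_preimage hU hV).measurableSet).union hU.measurableSet.compl
  · have h : U.indicator f ⁻¹' V = U ∩ f ⁻¹' V := by
      ext z
      by_cases hz : z ∈ U <;> simp [Set.indicator_apply, hz, h0]
    rw [h]
    exact (hf.isOpen_inter_preimage hU hV).measurableSet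


/-- Proposition 2.7: let `W` be a standard Brownian motion and `b` satisfy
H1–H3 (`b 0 = 0`; non-decreasing on `(0,∞)`; continuous on `[0,∞)` and `C¹` on `(0,∞)`
with non-increasing derivative `b'`), H7 (`E[∫₀ᵀ b'(|W s|+) ds] < ∞`, with
`b'(|W s|+) = b' |W s|` a.s.), and `b ≥ 0` on `(-ε,0)` for some `ε > 0`. Then for almost
every sample path of `W`, the equation `X t = ∫₀ᵗ b (X s) ds + |W t|` has exactly one
continuous solution on `[0,T]`. -/
theorem stmt19 {Ω : Type*} [MeasurableSpace Ω] (P : Measure Ω) [IsProbabilityMeasure P]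
    (W : ℝ → Ω → ℝ) (hW : IsBrownianMotion P W) (T : ℝ) (hT : 0 < T)
    (b b' : ℝ → ℝ)
    (hb0 : b 0 = 0)
    (hbmono : MonotoneOn b (Set.Ioi (0 : ℝ)))
    (hbcontIci : ContinuousOn b (Set.Ici (0 : ℝ)))
    (hbderiv : ∀ x ∈ Set.Ioi (0 : ℝ), HasDerivAt b (b' x) x)
    (hb'cont : ContinuousOn b' (Set.Ioi (0 : ℝ)))
    (hb'anti : AntitoneOn b' (Set.Ioi (0 : ℝ)))
    (hH7 : ∫⁻ ω, ∫⁻ s in Set.Ioc (0 : ℝ) T,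
      ENNReal.ofReal (b' |W s ω|) ∂volume ∂P < ⊤)
    (ε : ℝ) (hε : 0 < ε)
    (hbnonneg : ∀ x ∈ Set.Ioo (-ε) (0 : ℝ), 0 ≤ b x) :
    ∀ᵐ ωp ∂P,
      (∃ x : ℝ → ℝ, ContinuousOn x (Set.Icc 0 T) ∧
        ∀ t ∈ Set.Icc (0 : ℝ) T, x t = (∫ s in (0 : ℝ)..t, b (x s)) + |W t ωp|) ∧
      ∀ x xbar : ℝ → ℝ,
        ContinuousOn x (Set.Icc 0 T) →
        (∀ t ∈ Set.Icc (0 : ℝ) T, x t = (∫ s in (0 : ℝ)..t, b (x s)) + |W t ωp|) →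
        ContinuousOn xbar (Set.Icc 0 T) →
        (∀ t ∈ Set.Icc (0 : ℝ) T, xbar t = (∫ s in (0 : ℝ)..t, b (xbar s)) + |W t ωp|) →
        ∀ t ∈ Set.Icc (0 : ℝ) T, x t = xbar t := by
  obtain ⟨hW0, hWcont, hWmeas, hWgauss, _⟩ := hW
  -- joint measurability of (s, ω) ↦ W s ω
  have hWj : Measurable (Function.uncurry W) :=
    measurable_uncurry_of_continuous_of_measurable
      (fun ω => hWcont ω) hWmeas
  have hWj2 : Measurable fun p : Ω × ℝ => W p.2 p.1 := hWj.comp measurable_swap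
  -- derived facts about b
  have hbnn : ∀ y, 0 ≤ y → 0 ≤ b y := aux_bnonneg hb0 hbmono hbcontIci
  have hb'nn : ∀ z, 0 < z → 0 ≤ b' z := aux_b'nonneg hbmono hbderiv
  have hlip : ∀ c u v, 0 < c → c ≤ u → c ≤ v → |b v - b u| ≤ b' c * |v - u| :=
    aux_lip hbmono hbcontIci hbderiv hb'anti
  have hgrow : ∀ y, 0 ≤ y → b y ≤ b 1 + b' 1 * y :=
    aux_growth hb0 hbmono hbcontIci hbderiv hb'anti
  set μT := volume.restrict (Set.Ioc (0:ℝ) T) with hμT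
  -- the zero set of W
  set S : Set (Ω × ℝ) := (fun p : Ω × ℝ => W p.2 p.1) ⁻¹' {0} with hS
  have hSmeas : MeasurableSet S := hWj2 (measurableSet_singleton 0)
  -- P(W s = 0) = 0 for s > 0
  have hPzero : ∀ s : ℝ, 0 < s → P ((fun ω => (ω, s)) ⁻¹' S) = 0 := by
    intro s hs
    have hfun : (fun ω => W s ω - W 0 ω) = W s := funext fun ω => by rw [hW0, sub_zero]
    have hmap : Measure.map (W s) P = gaussianReal 0 (Real.toNNReal s) := by
      have := hWgauss 0 s le_rfl (le_of_lt hs)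
      rw [hfun] at this
      simpa using this
    have hvne : (Real.toNNReal s) ≠ 0 := ne_of_gt (Real.toNNReal_pos.2 hs)
    have habs : gaussianReal 0 (Real.toNNReal s) ≪ volume :=
      gaussianReal_absolutelyContinuous 0 hvne
    have hset : ((fun ω => (ω, s)) ⁻¹' S) = W s ⁻¹' {0} := rfl
    rw [hset, ← Measure.map_apply (hWmeas s) (measurableSet_singleton 0), hmap]
    exact habs (measure_singleton 0)
  -- the product measure of S vanishes
  have hz : (P.prod μT) S = 0 := by
    rw [Measure.prod_apply_symm hSmeas]
    have hae0 : ∀ᵐ s ∂μT, P ((fun ω => (ω, s)) ⁻¹' S) = 0 := by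
      rw [hμT]
      filter_upwards [ae_restrict_mem measurableSet_Ioc] with s hs
      exact hPzero s hs.1
    rw [lintegral_congr_ae hae0]
    simp
  -- a.e. ω the time-section of S is Lebesgue-null
  have hsec : ∀ᵐ ω ∂P, μT (Prod.mk ω ⁻¹' S) = 0 := by
    have h1 : ∫⁻ ω, μT (Prod.mk ω ⁻¹' S) ∂P = 0 := by
      rw [← Measure.prod_apply hSmeas, hz]
    exact (lintegral_eq_zero_iff (measurable_measure_prodMk_left hSmeas)).1 h1
  -- measurable version of s ↦ b'(|W s ω|)
  set q : ℝ → ENNReal := fun y => ENNReal.ofReal ((Set.Ioi (0:ℝ)).indicator b' y) with hq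
  have hqmeas : Measurable q :=
    ENNReal.measurable_ofReal.comp (measurable_indicator_of_continuousOn isOpen_Ioi hb'cont)
  set Ψ : Ω × ℝ → ENNReal := fun p => q |W p.2 p.1| with hΨ
  have hΨmeas : Measurable Ψ := hqmeas.comp hWj2.abs
  set G : Ω → ENNReal := fun ω => ∫⁻ s, Ψ (ω, s) ∂μT with hG
  have hGmeas : Measurable G := Measurable.lintegral_prod_right' hΨmeas
  have hGF : ∀ ω, μT (Prod.mk ω ⁻¹' S) = 0 →
      G ω = ∫⁻ s in Set.Ioc (0:ℝ) T, ENNReal.ofReal (b' |W s ω|) ∂volume := by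
    intro ω hω
    refine lintegral_congr_ae ?_
    have hne : ∀ᵐ s ∂μT, W s ω ≠ 0 := by
      rw [ae_iff]
      convert hω using 2
      ext s
      simp [hS, Set.mem_preimage]
    filter_upwards [hne] with s hs
    have hpos : 0 < |W s ω| := abs_pos.2 hs
    simp only [hΨ, hq]
    rw [Set.indicator_of_mem (Set.mem_Ioi.2 hpos)]
  have hGfin : ∫⁻ ω, G ω ∂P < ⊤ := by
    have : ∫⁻ ω, G ω ∂P
        = ∫⁻ ω, ∫⁻ s in Set.Ioc (0:ℝ) T, ENNReal.ofReal (b' |W s ω|) ∂volume ∂P := by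
      refine lintegral_congr_ae ?_
      filter_upwards [hsec] with ω hω
      exact hGF ω hω
    rw [this]
    exact hH7
  have hGae : ∀ᵐ ω ∂P, G ω < ⊤ := ae_lt_top hGmeas hGfin.ne
  -- conclusion
  filter_upwards [hsec, hGae] with ω hω1 hω2
  set g : ℝ → ℝ := fun t => |W t ω| with hgdef
  have hg : Continuous g := (hWcont ω).abs
  have hgnn : ∀ t, 0 ≤ g t := fun t => abs_nonneg _
  have hfin : ∫⁻ s in Set.Ioc (0:ℝ) T, ENNReal.ofReal (b' (g s)) ∂volume < ⊤ := by
    rw [show (fun s => ENNReal.ofReal (b' (g s))) = fun s => ENNReal.ofReal (b' |W s ω|) from rfl]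
    rw [← hGF ω hω1]
    exact hω2
  have hnull : volume {s : ℝ | s ∈ Set.Ioc (0:ℝ) T ∧ g s = 0} = 0 := by
    have hWsm : MeasurableSet {s : ℝ | W s ω = 0} :=
      (isClosed_eq (hWcont ω) continuous_const).measurableSet
    have h1 : μT (Prod.mk ω ⁻¹' S) = volume ({s : ℝ | W s ω = 0} ∩ Set.Ioc (0:ℝ) T) := by
      show volume.restrict (Set.Ioc (0:ℝ) T) {s : ℝ | W s ω = 0} = _
      rw [Measure.restrict_apply hWsm]
    refine measure_mono_null ?_ (h1 ▸ hω1)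
    intro s hs
    exact ⟨abs_eq_zero.1 hs.2, hs.1⟩
  constructor
  · exact exists_sol hbnn hb0 hbmono hbcontIci hgrow (hbnn 1 zero_le_one)
      (hb'nn 1 one_pos) hT hg hgnn
  · intro x xbar hx hxeq hxb hxbeq
    have hxg : ∀ t ∈ Set.Icc (0:ℝ) T, g t ≤ x t :=
      sol_nonneg hbnn hbnonneg hε hgnn hx hxeq
    have hxbg : ∀ t ∈ Set.Icc (0:ℝ) T, g t ≤ xbar t :=
      sol_nonneg hbnn hbnonneg hε hgnn hxb hxbeq
    exact sol_unique hbcontIci hb'cont hlip hb'nn hT hg hgnn hfin hnull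
      hx hxg hxeq hxb hxbg hxbeq
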